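/- arXiv:1211.3695 — 2 statements merged into one kernel-verified Lean document; each statement's English description precedes it below -/
import Mathlib

section
/- Let G be a group, α a normalized 3-cocycle on G, g ∈ G, x ∈ G, and ρ a β_g-representation of Z_g by invertible n×n complex matrices. Define ρ' on Z_{xgx⁻¹} = xZ_gx⁻¹ by ρ'(k) = η^g(x⁻¹kx, x) · ρ(x⁻¹kx). Then ρ' is a β_{xgx⁻¹}-representation of Z_{xgx⁻¹}: for all k₁, k₂ ∈ Z_{xgx⁻¹}, ρ'(k₁) · ρ'(k₂) = β_{xgx⁻¹}(k₁, k₂) · ρ'(k₁k₂). -/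
/-- A normalized 3-cocycle on a group `G` with values in `ℂˣ`. -/
def IsNormalized3Cocycle {G : Type*} [Group G] (α : G → G → G → ℂˣ) : Prop :=
  (∀ g₀ g₁ g₂ g₃ : G,
      α g₁ g₂ g₃ * (α (g₀ * g₁) g₂ g₃)⁻¹ * α g₀ (g₁ * g₂) g₃ *
        (α g₀ g₁ (g₂ * g₃))⁻¹ * α g₀ g₁ g₂ = 1) ∧
  (∀ g h : G, α 1 g h = 1 ∧ α g 1 h = 1 ∧ α g h 1 = 1)

/-- The twisted 2-cocycle `β_a(b,c)` built from a 3-cocycle `α`. -/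
def betaTw {G : Type*} [Group G] (α : G → G → G → ℂˣ) (a b c : G) : ℂˣ :=
  α a b c * α b c (c⁻¹ * b⁻¹ * a * b * c) * (α b (b⁻¹ * a * b) c)⁻¹

/-- The phase `η^g(h,x) = β_g(x⁻¹, x h x⁻¹) · β_g(h, x⁻¹)⁻¹`. -/
def etaTw {G : Type*} [Group G] (α : G → G → G → ℂˣ) (g h x : G) : ℂˣ :=
  betaTw α g x⁻¹ (x * h * x⁻¹) * (betaTw α g h x⁻¹)⁻¹

/-- Cleared form of the 3-cocycle identity, in `ℂ`. -/
lemma alphaC {G : Type*} [Group G] {α : G → G → G → ℂˣ}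
    (hα : IsNormalized3Cocycle α) (g₀ g₁ g₂ g₃ : G) :
    (α g₁ g₂ g₃ : ℂ) * (α g₀ (g₁ * g₂) g₃ : ℂ) * (α g₀ g₁ g₂ : ℂ) =
      (α (g₀ * g₁) g₂ g₃ : ℂ) * (α g₀ g₁ (g₂ * g₃) : ℂ) := by
  have h0 := hα.1 g₀ g₁ g₂ g₃
  have h1 : α g₁ g₂ g₃ * α g₀ (g₁ * g₂) g₃ * α g₀ g₁ g₂ =
      α (g₀ * g₁) g₂ g₃ * α g₀ g₁ (g₂ * g₃) := by
    rw [← mul_inv_eq_one]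
    calc α g₁ g₂ g₃ * α g₀ (g₁ * g₂) g₃ * α g₀ g₁ g₂ *
          (α (g₀ * g₁) g₂ g₃ * α g₀ g₁ (g₂ * g₃))⁻¹
        = α g₁ g₂ g₃ * (α (g₀ * g₁) g₂ g₃)⁻¹ * α g₀ (g₁ * g₂) g₃ *
          (α g₀ g₁ (g₂ * g₃))⁻¹ * α g₀ g₁ g₂ := by
          simp only [mul_inv_rev]
          simp only [mul_comm, mul_left_comm, mul_assoc]
      _ = 1 := h0
  exact_mod_cast congrArg Units.val h1

/-- Cleared form of the definition of `betaTw`, in `ℂ`. -/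
lemma betaC {G : Type*} [Group G] (α : G → G → G → ℂˣ) (a b c : G) :
    (betaTw α a b c : ℂ) * (α b (b⁻¹ * a * b) c : ℂ) =
      (α a b c : ℂ) * (α b c (c⁻¹ * b⁻¹ * a * b * c) : ℂ) := by
  have h : betaTw α a b c * α b (b⁻¹ * a * b) c =
      α a b c * α b c (c⁻¹ * b⁻¹ * a * b * c) := by
    unfold betaTw
    exact inv_mul_cancel_right _ _
  exact_mod_cast congrArg Units.val h

/-- Cleared form of the definition of `etaTw`, in `ℂ`. -/
lemma etaC {G : Type*} [Group G] (α : G → G → G → ℂˣ) (g h x : G) :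
    (etaTw α g h x : ℂ) * (betaTw α g h x⁻¹ : ℂ) =
      (betaTw α g x⁻¹ (x * h * x⁻¹) : ℂ) := by
  have h1 : etaTw α g h x * betaTw α g h x⁻¹ = betaTw α g x⁻¹ (x * h * x⁻¹) := by
    unfold etaTw
    exact inv_mul_cancel_right _ _
  exact_mod_cast congrArg Units.val h1

/-- The Dijkgraaf–Pasquier–Roche cocycle identity for `betaTw`, in `ℂ`. -/
lemma dprC {G : Type*} [Group G] {α : G → G → G → ℂˣ}
    (hα : IsNormalized3Cocycle α) (a u v w : G) :
    (betaTw α a u v : ℂ) * (betaTw α a (u * v) w : ℂ) =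
      (betaTw α a u (v * w) : ℂ) * (betaTw α (u⁻¹ * a * u) v w : ℂ) := by
  have b1 := betaC α a u v
  have b2 := betaC α a (u * v) w
  rw [show w⁻¹ * (u * v)⁻¹ * a * (u * v) * w = w⁻¹ * v⁻¹ * u⁻¹ * a * u * v * w by group,
      show (u * v)⁻¹ * a * (u * v) = v⁻¹ * u⁻¹ * a * u * v by group] at b2
  have b3 := betaC α a u (v * w)
  rw [show (v * w)⁻¹ * u⁻¹ * a * u * (v * w) = w⁻¹ * v⁻¹ * u⁻¹ * a * u * v * w by group] at b3
  have b4 := betaC α (u⁻¹ * a * u) v w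
  rw [show w⁻¹ * v⁻¹ * (u⁻¹ * a * u) * v * w = w⁻¹ * v⁻¹ * u⁻¹ * a * u * v * w by group,
      show v⁻¹ * (u⁻¹ * a * u) * v = v⁻¹ * u⁻¹ * a * u * v by group] at b4
  have e1 := alphaC hα a u v w
  have e2 := alphaC hα u v (v⁻¹ * u⁻¹ * a * u * v) w
  rw [show v * (v⁻¹ * u⁻¹ * a * u * v) = u⁻¹ * a * u * v by group,
      show v⁻¹ * u⁻¹ * a * u * v * w = w * (w⁻¹ * v⁻¹ * u⁻¹ * a * u * v * w) by group] at e2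
  have e3 := alphaC hα u (u⁻¹ * a * u) v w
  rw [show u * (u⁻¹ * a * u) = a * u by group] at e3
  have e4 := alphaC hα u v w (w⁻¹ * v⁻¹ * u⁻¹ * a * u * v * w)
  have hne : (α u (u⁻¹ * a * u) v : ℂ) * (α (u * v) (v⁻¹ * u⁻¹ * a * u * v) w : ℂ) *
      (α u (u⁻¹ * a * u) (v * w) : ℂ) * (α v (v⁻¹ * u⁻¹ * a * u * v) w : ℂ) *
      (α u v w : ℂ) ≠ 0 := by
    exact mul_ne_zero (mul_ne_zero (mul_ne_zero (mul_ne_zero (Units.ne_zero _)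
      (Units.ne_zero _)) (Units.ne_zero _)) (Units.ne_zero _)) (Units.ne_zero _)
  refine mul_right_cancel₀ hne ?_
  linear_combination
    ((betaTw α a (u * v) w : ℂ)*(α (u * v) (v⁻¹ * u⁻¹ * a * u * v) w : ℂ)*(α u (u⁻¹ * a * u) (v * w) : ℂ)*(α u v w : ℂ)*(α v (v⁻¹ * u⁻¹ * a * u * v) w : ℂ))*b1
    + ((α a u v : ℂ)*(α u (u⁻¹ * a * u) (v * w) : ℂ)*(α u v (v⁻¹ * u⁻¹ * a * u * v) : ℂ)*(α u v w : ℂ)*(α v (v⁻¹ * u⁻¹ * a * u * v) w : ℂ))*b2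
    + ((α (u * v) w (w⁻¹ * v⁻¹ * u⁻¹ * a * u * v * w) : ℂ)*(α u (u⁻¹ * a * u) (v * w) : ℂ)*(α u v (v⁻¹ * u⁻¹ * a * u * v) : ℂ)*(α v (v⁻¹ * u⁻¹ * a * u * v) w : ℂ))*e1
    - ((α (u * v) w (w⁻¹ * v⁻¹ * u⁻¹ * a * u * v * w) : ℂ)*(α a u (v * w) : ℂ)*(α u v (v⁻¹ * u⁻¹ * a * u * v) : ℂ)*(α v (v⁻¹ * u⁻¹ * a * u * v) w : ℂ))*e3
    + ((α (u * v) w (w⁻¹ * v⁻¹ * u⁻¹ * a * u * v * w) : ℂ)*(α (u⁻¹ * a * u) v w : ℂ)*(α a u (v * w) : ℂ)*(α u (u⁻¹ * a * u) v : ℂ))*e2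
    - ((α (u * v) (v⁻¹ * u⁻¹ * a * u * v) w : ℂ)*(α (u⁻¹ * a * u) v w : ℂ)*(α a u (v * w) : ℂ)*(α u (u⁻¹ * a * u) v : ℂ))*e4
    - ((α (u * v) (v⁻¹ * u⁻¹ * a * u * v) w : ℂ)*(α (u⁻¹ * a * u) v w : ℂ)*(α u (u⁻¹ * a * u) v : ℂ)*(α u v w : ℂ)*(α v w (w⁻¹ * v⁻¹ * u⁻¹ * a * u * v * w) : ℂ))*b3
    - ((betaTw α a u (v * w) : ℂ)*(α (u * v) (v⁻¹ * u⁻¹ * a * u * v) w : ℂ)*(α u (u⁻¹ * a * u) (v * w) : ℂ)*(α u (u⁻¹ * a * u) v : ℂ)*(α u v w : ℂ))*b4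

/-- The key scalar identity: `η` intertwines the projective cocycles. -/
lemma scalarS {G : Type*} [Group G] {α : G → G → G → ℂˣ}
    (hα : IsNormalized3Cocycle α) (g x h₁ h₂ : G) (hc1 : h₁ * g = g * h₁) :
    (etaTw α g h₁ x : ℂ) * (etaTw α g h₂ x : ℂ) * (betaTw α g h₁ h₂ : ℂ) =
      (betaTw α (x * g * x⁻¹) (x * h₁ * x⁻¹) (x * h₂ * x⁻¹) : ℂ) *
        (etaTw α g (h₁ * h₂) x : ℂ) := by
  have r1 : h₁⁻¹ * g * h₁ = g := by rw [mul_assoc, ← hc1]; group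
  have E1 := etaC α g h₁ x
  have E2 := etaC α g h₂ x
  have E3 := etaC α g (h₁ * h₂) x
  have D1 := dprC hα g h₁ h₂ x⁻¹
  rw [r1] at D1
  have D2 := dprC hα g h₁ x⁻¹ (x * h₂ * x⁻¹)
  rw [r1, show x⁻¹ * (x * h₂ * x⁻¹) = h₂ * x⁻¹ by group] at D2
  have D3 := dprC hα g x⁻¹ (x * h₁ * x⁻¹) (x * h₂ * x⁻¹)
  rw [show x⁻¹⁻¹ * g * x⁻¹ = x * g * x⁻¹ by group,
      show x⁻¹ * (x * h₁ * x⁻¹) = h₁ * x⁻¹ by group,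
      show x * h₁ * x⁻¹ * (x * h₂ * x⁻¹) = x * (h₁ * h₂) * x⁻¹ by group] at D3
  have hne : (betaTw α g h₁ x⁻¹ : ℂ) * (betaTw α g h₂ x⁻¹ : ℂ) *
      (betaTw α g (h₁ * h₂) x⁻¹ : ℂ) *
      (betaTw α g (h₁ * x⁻¹) (x * h₂ * x⁻¹) : ℂ) ≠ 0 := by
    exact mul_ne_zero (mul_ne_zero (mul_ne_zero (Units.ne_zero _) (Units.ne_zero _))
      (Units.ne_zero _)) (Units.ne_zero _)
  refine mul_right_cancel₀ hne ?_
  linear_combination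
    ((betaTw α g (h₁ * h₂) x⁻¹ : ℂ)*(betaTw α g (h₁ * x⁻¹) (x * h₂ * x⁻¹) : ℂ)*(betaTw α g h₁ h₂ : ℂ)*(betaTw α g h₂ x⁻¹ : ℂ)*(etaTw α g h₂ x : ℂ))*E1
    + ((betaTw α g (h₁ * h₂) x⁻¹ : ℂ)*(betaTw α g (h₁ * x⁻¹) (x * h₂ * x⁻¹) : ℂ)*(betaTw α g h₁ h₂ : ℂ)*(betaTw α g x⁻¹ (x * h₁ * x⁻¹) : ℂ))*E2
    + ((betaTw α g (h₁ * x⁻¹) (x * h₂ * x⁻¹) : ℂ)*(betaTw α g x⁻¹ (x * h₁ * x⁻¹) : ℂ)*(betaTw α g x⁻¹ (x * h₂ * x⁻¹) : ℂ))*D1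
    - ((betaTw α g (h₁ * x⁻¹) (x * h₂ * x⁻¹) : ℂ)*(betaTw α g h₂ x⁻¹ : ℂ)*(betaTw α g x⁻¹ (x * h₁ * x⁻¹) : ℂ))*D2
    + ((betaTw α g (h₁ * x⁻¹) (x * h₂ * x⁻¹) : ℂ)*(betaTw α g h₁ x⁻¹ : ℂ)*(betaTw α g h₂ x⁻¹ : ℂ))*D3
    - ((betaTw α (x * g * x⁻¹) (x * h₁ * x⁻¹) (x * h₂ * x⁻¹) : ℂ)*(betaTw α g (h₁ * x⁻¹) (x * h₂ * x⁻¹) : ℂ)*(betaTw α g h₁ x⁻¹ : ℂ)*(betaTw α g h₂ x⁻¹ : ℂ))*E3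

theorem conj_projective_rep {G : Type*} [Group G] (n : ℕ)
    (α : G → G → G → ℂˣ) (hα : IsNormalized3Cocycle α) (g x : G)
    (ρ : G → Matrix (Fin n) (Fin n) ℂ)
    (hinv : ∀ k : G, k * g = g * k → IsUnit (ρ k))
    (hrep : ∀ a b : G, a * g = g * a → b * g = g * b →
      ρ a * ρ b = (betaTw α g a b : ℂ) • ρ (a * b)) :
    ∀ k₁ k₂ : G,
      k₁ * (x * g * x⁻¹) = (x * g * x⁻¹) * k₁ →
      k₂ * (x * g * x⁻¹) = (x * g * x⁻¹) * k₂ →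
      ((etaTw α g (x⁻¹ * k₁ * x) x : ℂ) • ρ (x⁻¹ * k₁ * x)) *
          ((etaTw α g (x⁻¹ * k₂ * x) x : ℂ) • ρ (x⁻¹ * k₂ * x)) =
        (betaTw α (x * g * x⁻¹) k₁ k₂ : ℂ) •
          ((etaTw α g (x⁻¹ * (k₁ * k₂) * x) x : ℂ) • ρ (x⁻¹ * (k₁ * k₂) * x)) := by
  intro k₁ k₂ hk₁ hk₂
  have hc1 : (x⁻¹ * k₁ * x) * g = g * (x⁻¹ * k₁ * x) := by
    calc (x⁻¹ * k₁ * x) * g = x⁻¹ * (k₁ * (x * g * x⁻¹)) * x := by group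
      _ = x⁻¹ * ((x * g * x⁻¹) * k₁) * x := by rw [hk₁]
      _ = g * (x⁻¹ * k₁ * x) := by group
  have hc2 : (x⁻¹ * k₂ * x) * g = g * (x⁻¹ * k₂ * x) := by
    calc (x⁻¹ * k₂ * x) * g = x⁻¹ * (k₂ * (x * g * x⁻¹)) * x := by group
      _ = x⁻¹ * ((x * g * x⁻¹) * k₂) * x := by rw [hk₂]
      _ = g * (x⁻¹ * k₂ * x) := by group
  have S := scalarS hα g x (x⁻¹ * k₁ * x) (x⁻¹ * k₂ * x) hc1
  rw [show x * (x⁻¹ * k₁ * x) * x⁻¹ = k₁ by group,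
      show x * (x⁻¹ * k₂ * x) * x⁻¹ = k₂ by group,
      show (x⁻¹ * k₁ * x) * (x⁻¹ * k₂ * x) = x⁻¹ * (k₁ * k₂) * x by group] at S
  rw [show x⁻¹ * (k₁ * k₂) * x = (x⁻¹ * k₁ * x) * (x⁻¹ * k₂ * x) by group] at S ⊢
  rw [smul_mul_smul_comm, hrep _ _ hc1 hc2, smul_smul, smul_smul]
  rw [show (etaTw α g (x⁻¹ * k₁ * x) x : ℂ) * (etaTw α g (x⁻¹ * k₂ * x) x : ℂ) *
      (betaTw α g (x⁻¹ * k₁ * x) (x⁻¹ * k₂ * x) : ℂ) =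
      (betaTw α (x * g * x⁻¹) k₁ k₂ : ℂ) *
      (etaTw α g (x⁻¹ * k₁ * x * (x⁻¹ * k₂ * x)) x : ℂ) from by linear_combination S]
end

section
/- Let G be a group, α a normalized 3-cocycle on G, and g ∈ G an element of finite order p. Then for every x ∈ G (so that xgx⁻¹ also has order p): ∏_{n=0}^{p−1} α(xgx⁻¹, (xgx⁻¹)ⁿ, xgx⁻¹) = ∏_{n=0}^{p−1} α(g, gⁿ, g). That is, the quantity ω = ∏_{n=0}^{p−1} α(g, gⁿ, g) depends only on the conjugacy class of g. -/
section helpers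
variable {G : Type*} [Group G] {α : G → G → G → ℂˣ}

/-- The pentagon identity in product form, at the level of `ℂ`. -/
lemma pentC (hα : IsNormalized3Cocycle α) (g₀ g₁ g₂ g₃ : G) :
    (α g₁ g₂ g₃ : ℂ) * α g₀ (g₁ * g₂) g₃ * α g₀ g₁ g₂ =
      (α (g₀ * g₁) g₂ g₃ : ℂ) * α g₀ g₁ (g₂ * g₃) := by
  have h := congrArg (Units.val) (hα.1 g₀ g₁ g₂ g₃)
  simp only [Units.val_mul, Units.val_inv_eq_inv_val, Units.val_one] at h
  have h2 : (α (g₀ * g₁) g₂ g₃ : ℂ) ≠ 0 := Units.ne_zero _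
  have h4 : (α g₀ g₁ (g₂ * g₃) : ℂ) ≠ 0 := Units.ne_zero _
  field_simp at h
  linear_combination h

lemma betaTwC (a b c : G) :
    (betaTw α a b c : ℂ) =
      (α a b c : ℂ) * α b c (c⁻¹ * b⁻¹ * a * b * c) / α b (b⁻¹ * a * b) c := by
  simp [betaTw, Units.val_mul, Units.val_inv_eq_inv_val, div_eq_mul_inv]

lemma betaTw_one_right (hα : IsNormalized3Cocycle α) (a b : G) : betaTw α a b 1 = 1 := by
  simp [betaTw, (hα.2 _ _).2.2, (hα.2 _ _).2.1]

lemma betaTw_one_mid (hα : IsNormalized3Cocycle α) (a c : G) : betaTw α a 1 c = 1 := by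
  simp [betaTw, (hα.2 _ _).1, (hα.2 _ _).2.1]

/-- The 2-cocycle identity for the twisted 2-cocycle `betaTw`. -/
lemma betaTw_cocycle (hα : IsNormalized3Cocycle α) (a b c d : G) :
    (betaTw α a b c : ℂ) * betaTw α a (b * c) d =
      (betaTw α a b (c * d) : ℂ) * betaTw α (b⁻¹ * a * b) c d := by
  set u := b⁻¹ * a * b with hu
  set v := c⁻¹ * u * c with hv
  set w := d⁻¹ * v * d with hw
  have f1 : c⁻¹ * b⁻¹ * a * b * c = v := by rw [hv, hu]; group
  have f2 : d⁻¹ * (b * c)⁻¹ * a * (b * c) * d = w := by rw [hw, hv, hu]; group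
  have f3 : (b * c)⁻¹ * a * (b * c) = v := by rw [hv, hu]; group
  have f4 : d⁻¹ * c⁻¹ * u * c * d = w := by rw [hw, hv]; group
  have f5 : (c * d)⁻¹ * b⁻¹ * a * b * (c * d) = w := by rw [hw, hv, hu]; group
  have f6 : c⁻¹ * u * c = v := hv.symm
  have g1 : b * u = a * b := by rw [hu]; group
  have g2 : u * c = c * v := by rw [hv]; group
  have g3 : v * d = d * w := by rw [hw]; group
  have P1 := pentC hα a b c d
  have P2 := pentC hα b u c d
  have P3 := pentC hα b c v d
  have P4 := pentC hα b c d w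
  rw [g1, g2] at P2
  rw [g3] at P3
  rw [betaTwC, betaTwC, betaTwC, betaTwC, f1, f2, f3, f4, f5, f6, ← hu]
  have nz : ∀ y z t : G, (α y z t : ℂ) ≠ 0 := fun _ _ _ => Units.ne_zero _
  rw [div_mul_div_comm, div_mul_div_comm,
    div_eq_div_iff (mul_ne_zero (nz _ _ _) (nz _ _ _)) (mul_ne_zero (nz _ _ _) (nz _ _ _))]
  refine mul_right_cancel₀ (b := (α b c d : ℂ) * α b (c * v) d * α (a * b) c d
    * α b c (d * w)) (by exact mul_ne_zero (mul_ne_zero (mul_ne_zero (nz _ _ _) (nz _ _ _)) (nz _ _ _)) (nz _ _ _)) ?_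
  linear_combination
    ((α (a*b) c d : ℂ) * α b u (c*d) * ((α (b*c) d w : ℂ) * α b c (d*w)) *
      ((α c v d : ℂ) * α b (c*v) d * α b c v)) * P1
  - ((α (a*b) c d : ℂ) * α a b (c*d) * ((α (b*c) v d : ℂ) * α b c (d*w)) *
      ((α c d w : ℂ) * α b (c*d) w * α b c d)) * P2
  + ((α (a*b) c d : ℂ) * α b u (c*d) * ((α (b*c) d w : ℂ) * α b c (d*w)) *
      ((α (a*b) c d : ℂ) * α a b (c*d))) * P3
  - ((α (a*b) c d : ℂ) * α a b (c*d) * ((α (b*c) v d : ℂ) * α b c (d*w)) *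
      ((α (a*b) c d : ℂ) * α b u (c*d))) * P4

/-- `betaTw α a a c = α a c (c⁻¹ * a * c)`. -/
lemma betaTw_self (a c : G) : betaTw α a a c = α a c (c⁻¹ * a * c) := by
  have e1 : c⁻¹ * a⁻¹ * a * a * c = c⁻¹ * a * c := by group
  have e2 : a⁻¹ * a * a = a := by group
  unfold betaTw
  rw [e1, e2, mul_comm (α a a c), mul_assoc, mul_inv_cancel, mul_one]

/-- If `b⁻¹ * a * b = c` then `betaTw α a b c = α a b c`. -/
lemma betaTw_of_conj (a b c : G) (hc : b⁻¹ * a * b = c) :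
    betaTw α a b c = α a b c := by
  have e1 : c⁻¹ * b⁻¹ * a * b * c = c := by
    rw [show c⁻¹ * b⁻¹ * a * b * c = c⁻¹ * (b⁻¹ * a * b) * c by group, hc]
    group
  unfold betaTw
  rw [e1, hc, mul_inv_cancel_right]

/-- `betaTw` on a commuting pair collapses to `α`. -/
lemma betaTw_self_comm (a c : G) (hc : a * c = c * a) :
    betaTw α a a c = α a c a := by
  rw [betaTw_self]
  congr 1
  rw [mul_assoc, hc, inv_mul_cancel_left]

/-- Telescoping helper. -/
lemma prod_shift (p : ℕ) (f : ℕ → ℂ) (h0 : f 0 = 1) (hfp : f p = 1) :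
    ∏ k ∈ Finset.range p, f (k + 1) = ∏ k ∈ Finset.range p, f k := by
  calc ∏ k ∈ Finset.range p, f (k + 1)
      = (∏ k ∈ Finset.range p, f (k + 1)) * f 0 := by rw [h0, mul_one]
    _ = ∏ k ∈ Finset.range (p + 1), f k := (Finset.prod_range_succ' f p).symm
    _ = (∏ k ∈ Finset.range p, f k) * f p := Finset.prod_range_succ f p
    _ = ∏ k ∈ Finset.range p, f k := by rw [hfp, mul_one]

end helpers

/-- The ℂ-valued version of `betaTw`. -/
noncomputable def bC {G : Type*} [Group G] (α : G → G → G → ℂˣ) (a b c : G) : ℂ :=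
  ((betaTw α a b c : ℂˣ) : ℂ)

section bCfacts
variable {G : Type*} [Group G] {α : G → G → G → ℂˣ}

lemma bC_ne_zero (a b c : G) : bC α a b c ≠ 0 := Units.ne_zero _

lemma bC_cocycle (hα : IsNormalized3Cocycle α) (a b c d : G) :
    bC α a b c * bC α a (b * c) d = bC α a b (c * d) * bC α (b⁻¹ * a * b) c d :=
  betaTw_cocycle hα a b c d

lemma bC_one_mid (hα : IsNormalized3Cocycle α) (a c : G) : bC α a 1 c = 1 := by
  unfold bC; rw [betaTw_one_mid hα, Units.val_one]

lemma bC_one_right (hα : IsNormalized3Cocycle α) (a b : G) : bC α a b 1 = 1 := by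
  unfold bC; rw [betaTw_one_right hα, Units.val_one]

lemma bC_of_conj (a b c : G) (hc : b⁻¹ * a * b = c) : bC α a b c = α a b c := by
  unfold bC; rw [betaTw_of_conj a b c hc]

lemma bC_self (a c : G) : bC α a a c = α a c (c⁻¹ * a * c) := by
  unfold bC; rw [betaTw_self]

lemma bC_self_comm (a c : G) (hc : a * c = c * a) : bC α a a c = α a c a := by
  unfold bC; rw [betaTw_self_comm a c hc]

end bCfacts

theorem omega_conjugation_invariant {G : Type*} [Group G]
    (α : G → G → G → ℂˣ) (hα : IsNormalized3Cocycle α) (g : G) (p : ℕ)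
    (hp : 0 < p) (hgp : g ^ p = 1)
    (hleast : ∀ q : ℕ, 0 < q → q < p → g ^ q ≠ 1) (x : G) :
    ∏ k ∈ Finset.range p,
        α (x * g * x⁻¹) ((x * g * x⁻¹) ^ k) (x * g * x⁻¹) =
      ∏ k ∈ Finset.range p, α g (g ^ k) g := by
  set h := x * g * x⁻¹ with hh
  have hconj : x⁻¹ * h * x = g := by rw [hh]; group
  have hpowk : ∀ k : ℕ, h ^ k = x * g ^ k * x⁻¹ := fun k => by rw [hh, conj_pow]
  have hhp : h ^ p = 1 := by rw [hpowk, hgp, mul_one, mul_inv_cancel]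
  -- instance families of the 2-cocycle identity
  have I1 : ∀ k : ℕ, bC α h h (h ^ k) * bC α h (h ^ (k + 1)) x =
      bC α h h (h ^ k * x) * bC α h (h ^ k) x := by
    intro k
    have e := bC_cocycle hα h h (h ^ k) x
    rwa [show h * h ^ k = h ^ (k + 1) from (pow_succ' h k).symm,
      show h⁻¹ * h * h = h by group] at e
  have I2 : ∀ k : ℕ, bC α h h (x * g ^ k) * bC α h x (g ^ k) =
      bC α h h x * bC α h (x * g) (g ^ k) := by
    intro k
    have e := bC_cocycle hα h h x (g ^ k)
    rw [show h * x = x * g by rw [hh]; group, show h⁻¹ * h * h = h by group] at e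
    linear_combination -e
  have I3 : ∀ k : ℕ, bC α g g (g ^ k) * bC α h x (g ^ (k + 1)) =
      bC α h x g * bC α h (x * g) (g ^ k) := by
    intro k
    have e := bC_cocycle hα h x g (g ^ k)
    rw [show g * g ^ k = g ^ (k + 1) from (pow_succ' g k).symm, hconj] at e
    linear_combination -e
  -- telescoping
  have tel1 : ∏ k ∈ Finset.range p, bC α h (h ^ (k + 1)) x =
      ∏ k ∈ Finset.range p, bC α h (h ^ k) x :=
    prod_shift p (fun k => bC α h (h ^ k) x)
      (by simp only [pow_zero]; exact bC_one_mid hα h x)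
      (by simp only [hhp]; exact bC_one_mid hα h x)
  have tel2 : ∏ k ∈ Finset.range p, bC α h x (g ^ (k + 1)) =
      ∏ k ∈ Finset.range p, bC α h x (g ^ k) :=
    prod_shift p (fun k => bC α h x (g ^ k))
      (by simp only [pow_zero]; exact bC_one_right hα h x)
      (by simp only [hgp]; exact bC_one_right hα h x)
  -- products of the instances
  have PA : (∏ k ∈ Finset.range p, bC α h h (h ^ k)) *
      ∏ k ∈ Finset.range p, bC α h (h ^ (k + 1)) x =
      (∏ k ∈ Finset.range p, bC α h h (h ^ k * x)) *
      ∏ k ∈ Finset.range p, bC α h (h ^ k) x := by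
    rw [← Finset.prod_mul_distrib, ← Finset.prod_mul_distrib]
    exact Finset.prod_congr rfl fun k _ => I1 k
  have PB : (∏ k ∈ Finset.range p, bC α h h (x * g ^ k)) *
      ∏ k ∈ Finset.range p, bC α h x (g ^ k) =
      (bC α h h x) ^ p * ∏ k ∈ Finset.range p, bC α h (x * g) (g ^ k) := by
    rw [← Finset.prod_mul_distrib]
    calc ∏ k ∈ Finset.range p, (bC α h h (x * g ^ k) * bC α h x (g ^ k))
        = ∏ k ∈ Finset.range p, (bC α h h x * bC α h (x * g) (g ^ k)) :=
          Finset.prod_congr rfl fun k _ => I2 k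
      _ = _ := by rw [Finset.prod_mul_distrib, Finset.prod_const, Finset.card_range]
  have PC : (∏ k ∈ Finset.range p, bC α g g (g ^ k)) *
      ∏ k ∈ Finset.range p, bC α h x (g ^ k) =
      (bC α h x g) ^ p * ∏ k ∈ Finset.range p, bC α h (x * g) (g ^ k) := by
    rw [← tel2, ← Finset.prod_mul_distrib]
    calc ∏ k ∈ Finset.range p, (bC α g g (g ^ k) * bC α h x (g ^ (k + 1)))
        = ∏ k ∈ Finset.range p, (bC α h x g * bC α h (x * g) (g ^ k)) :=
          Finset.prod_congr rfl fun k _ => I3 k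
      _ = _ := by rw [Finset.prod_mul_distrib, Finset.prod_const, Finset.card_range]
  -- B h h x = B h x g
  have Bhhx : bC α h h x = bC α h x g := by
    rw [bC_self, hconj, bC_of_conj h x g hconj]
  -- step 1: ∏ bC h h (h^k) = ∏ bC h h (h^k x)
  have S1 : ∏ k ∈ Finset.range p, bC α h h (h ^ k) =
      ∏ k ∈ Finset.range p, bC α h h (h ^ k * x) := by
    have hT : (∏ k ∈ Finset.range p, bC α h (h ^ k) x) ≠ 0 :=
      Finset.prod_ne_zero_iff.2 fun k _ => bC_ne_zero _ _ _
    apply mul_right_cancel₀ hT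
    calc (∏ k ∈ Finset.range p, bC α h h (h ^ k)) *
        ∏ k ∈ Finset.range p, bC α h (h ^ k) x
        = (∏ k ∈ Finset.range p, bC α h h (h ^ k)) *
          ∏ k ∈ Finset.range p, bC α h (h ^ (k + 1)) x := by rw [tel1]
      _ = _ := PA
  have hxk : ∀ k : ℕ, h ^ k * x = x * g ^ k := fun k => by
    rw [hpowk, inv_mul_cancel_right]
  have S2 : ∏ k ∈ Finset.range p, bC α h h (h ^ k * x) =
      ∏ k ∈ Finset.range p, bC α h h (x * g ^ k) :=
    Finset.prod_congr rfl fun k _ => by rw [hxk]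
  have S3 : ∏ k ∈ Finset.range p, bC α h h (x * g ^ k) =
      ∏ k ∈ Finset.range p, bC α g g (g ^ k) := by
    have hT : (∏ k ∈ Finset.range p, bC α h x (g ^ k)) ≠ 0 :=
      Finset.prod_ne_zero_iff.2 fun k _ => bC_ne_zero _ _ _
    apply mul_right_cancel₀ hT
    rw [PB, PC, Bhhx]
  have E : ∏ k ∈ Finset.range p, bC α h h (h ^ k) =
      ∏ k ∈ Finset.range p, bC α g g (g ^ k) := by
    rw [S1, S2, S3]
  -- translate back
  have G1 : ∏ k ∈ Finset.range p, α h (h ^ k) h =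
      ∏ k ∈ Finset.range p, betaTw α h h (h ^ k) :=
    Finset.prod_congr rfl fun k _ =>
      (betaTw_self_comm h (h ^ k) ((Commute.refl h).pow_right k).eq).symm
  have G2 : ∏ k ∈ Finset.range p, α g (g ^ k) g =
      ∏ k ∈ Finset.range p, betaTw α g g (g ^ k) :=
    Finset.prod_congr rfl fun k _ =>
      (betaTw_self_comm g (g ^ k) ((Commute.refl g).pow_right k).eq).symm
  rw [G1, G2]
  refine Units.ext ?_
  have c1 := map_prod (Units.coeHom ℂ) (fun k => betaTw α h h (h ^ k)) (Finset.range p)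
  have c2 := map_prod (Units.coeHom ℂ) (fun k => betaTw α g g (g ^ k)) (Finset.range p)
  simpa [Units.coeHom] using c1.trans (E.trans c2.symm)
end
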